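/- arXiv:quant-ph/0108059 — 3 statements merged into one kernel-verified Lean document; each statement's English description precedes it below -/
import Mathlib

section
/- Let μ be a finite Borel measure on ℝⁿ with ∫ e^{a‖x‖} dμ(x) < ∞ for some a > 0, and let f ∈ L^q(ℝⁿ, μ) with 1 < q < ∞ and 1/p + 1/q = 1. Then for every z = (z₁,…,zₙ) ∈ ℂⁿ with |Im zⱼ| < a/(2√n p) for all j, the integral ∫ |exp(-i ∑ⱼ zⱼ xⱼ) f(x)| e^{(a/(2p))‖x‖} dμ(x) is finite. -/
open MeasureTheory Complex
open scoped ENNReal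

/-- For an exponentially bounded finite Borel measure `μ` on `ℝⁿ`
and `f ∈ L^q(μ)` with `1 < q < ∞`, `1/p + 1/q = 1`, for every `z ∈ ℂⁿ` with
`|Im z_j| < a/(2√n p)` for all `j`, the integral
`∫ |exp(-i ∑ z_j x_j) f(x)| e^{(a/(2p))‖x‖} dμ(x)` is finite. -/
theorem integrable_exp_mul_of_small_imaginary_part
    (n : ℕ) (μ : Measure (EuclideanSpace ℝ (Fin n))) [IsFiniteMeasure μ]
    (a : ℝ) (ha : 0 < a)
    (hexp : Integrable (fun x => Real.exp (a * ‖x‖)) μ)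
    (p q : ℝ) (hpq : p.HolderConjugate q)
    (f : EuclideanSpace ℝ (Fin n) → ℝ) (hf : MemLp f (ENNReal.ofReal q) μ)
    (z : Fin n → ℂ) (hz : ∀ j, |(z j).im| < a / (2 * Real.sqrt n * p)) :
    Integrable
      (fun x => ‖Complex.exp (-I * ∑ j, z j * (x j : ℂ)) * (f x : ℂ)‖ *
        Real.exp (a / (2 * p) * ‖x‖)) μ := by
  have hp0 : (0 : ℝ) < p := hpq.pos
  have hq0 : (0 : ℝ) < q := hpq.symm.pos
  -- the auxiliary function h x = exp((a/p)‖x‖) is in L^p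
  set h : EuclideanSpace ℝ (Fin n) → ℝ := fun x => Real.exp (a / p * ‖x‖) with hhdef
  have hcont : Continuous h := by
    exact Real.continuous_exp.comp (continuous_const.mul continuous_norm)
  have hmeas : AEStronglyMeasurable h μ := hcont.aestronglyMeasurable
  have hhp : MemLp h (ENNReal.ofReal p) μ := by
    have hne0 : ENNReal.ofReal p ≠ 0 := by
      simp [ENNReal.ofReal_eq_zero, not_le, hp0]
    have hnetop : ENNReal.ofReal p ≠ ⊤ := ENNReal.ofReal_ne_top
    rw [← memLp_norm_rpow_iff (p := ENNReal.ofReal p) hmeas hne0 hnetop]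
    have : (fun x => ‖h x‖ ^ (ENNReal.ofReal p).toReal) =
        fun x => Real.exp (a * ‖x‖) := by
      funext x
      rw [ENNReal.toReal_ofReal hp0.le, Real.norm_eq_abs,
        abs_of_pos (Real.exp_pos _)]
      rw [← Real.exp_mul]
      congr 1
      field_simp
    rw [this, ENNReal.div_self hne0 hnetop, memLp_one_iff_integrable]
    exact hexp
  -- Hölder: h • |f| is integrable
  have hconj : (1 : ℝ≥0∞) / 1 = 1 / ENNReal.ofReal p + 1 / ENNReal.ofReal q := by
    rw [one_div, one_div, one_div, inv_one,
      ← ENNReal.ofReal_inv_of_pos hp0, ← ENNReal.ofReal_inv_of_pos hq0,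
      ← ENNReal.ofReal_add (by positivity) (by positivity)]
    rw [hpq.inv_add_inv_eq_one]
    simp
  have hg : Integrable (fun x => h x * |f x|) μ := by
    have := (hf.norm.smul hhp (r := 1) (hpqr := ⟨by simpa [one_div] using hconj.symm⟩))
    rw [memLp_one_iff_integrable] at this
    simpa [smul_eq_mul, Real.norm_eq_abs, Pi.mul_def] using this
  -- pointwise bound on the sum
  have hsum : ∀ x : EuclideanSpace ℝ (Fin n),
      (∑ j, (z j).im * x j) ≤ a / (2 * p) * ‖x‖ := by
    intro x
    rcases Nat.eq_zero_or_pos n with hn | hn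
    · subst hn
      simp [Finset.sum_empty]
      positivity
    have hsn : (0 : ℝ) < Real.sqrt n := Real.sqrt_pos.2 (by exact_mod_cast hn)
    have h1 : (∑ j, (z j).im * x j) ≤ ∑ j, |(z j).im| * |x j| := by
      apply Finset.sum_le_sum
      intro j _
      calc (z j).im * x j ≤ |(z j).im * x j| := le_abs_self _
        _ = |(z j).im| * |x j| := abs_mul _ _
    have h2 : (∑ j, |(z j).im| * |x j|) ≤
        a / (2 * Real.sqrt n * p) * ∑ j, |x j| := by
      rw [Finset.mul_sum]
      apply Finset.sum_le_sum
      intro j _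
      exact mul_le_mul_of_nonneg_right (hz j).le (abs_nonneg _)
    have h3 : (∑ j, |x j|) ≤ Real.sqrt n * ‖x‖ := by
      have hsq : (∑ j, |x j|) ^ 2 ≤ n * ∑ j, x j ^ 2 := by
        have := sq_sum_le_card_mul_sum_sq (s := Finset.univ) (f := fun j => |x (j : Fin n)|)
        simpa [_root_.sq_abs] using this
      have hnorm : ‖x‖ = Real.sqrt (∑ j, x j ^ 2) := by
        rw [EuclideanSpace.norm_eq]
        congr 1
        apply Finset.sum_congr rfl
        intro j _
        rw [Real.norm_eq_abs, _root_.sq_abs]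
      have : (∑ j, |x j|) ≤ Real.sqrt ((n : ℝ) * ∑ j, x j ^ 2) := by
        rw [← Real.sqrt_sq (by positivity : (0:ℝ) ≤ ∑ j, |x j|)]
        exact Real.sqrt_le_sqrt hsq
      rw [Real.sqrt_mul (by positivity)] at this
      rwa [hnorm]
    calc (∑ j, (z j).im * x j) ≤ ∑ j, |(z j).im| * |x j| := h1
      _ ≤ a / (2 * Real.sqrt n * p) * ∑ j, |x j| := h2
      _ ≤ a / (2 * Real.sqrt n * p) * (Real.sqrt n * ‖x‖) := by
          apply mul_le_mul_of_nonneg_left h3 (by positivity)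
      _ = a / (2 * p) * ‖x‖ := by field_simp
  -- measurability of the target function
  have hmeas2 : AEStronglyMeasurable
      (fun x => ‖Complex.exp (-I * ∑ j, z j * (x j : ℂ)) * (f x : ℂ)‖ *
        Real.exp (a / (2 * p) * ‖x‖)) μ := by
    have hcexp : Continuous fun x : EuclideanSpace ℝ (Fin n) =>
        Complex.exp (-I * ∑ j, z j * (x j : ℂ)) := by
      apply Complex.continuous_exp.comp
      apply continuous_const.mul
      apply continuous_finset_sum
      intro j _
      exact continuous_const.mul (Complex.continuous_ofReal.comp (EuclideanSpace.proj (𝕜 := ℝ) j).continuous)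
    have hfc : AEStronglyMeasurable (fun x => (f x : ℂ)) μ :=
      Complex.continuous_ofReal.comp_aestronglyMeasurable hf.1
    exact ((continuous_norm.comp_aestronglyMeasurable
      (hcexp.aestronglyMeasurable.mul hfc))).mul
      ((Real.continuous_exp.comp (continuous_const.mul continuous_norm)).aestronglyMeasurable)
  -- conclude by domination
  apply hg.mono' hmeas2
  filter_upwards with x
  have habs : ‖Complex.exp (-I * ∑ j, z j * (x j : ℂ)) * (f x : ℂ)‖ =
      Real.exp (∑ j, (z j).im * x j) * |f x| := by
    simp only [norm_mul, Complex.norm_exp, Complex.norm_real, Real.norm_eq_abs]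
    congr 2
    rw [Complex.mul_re]
    simp only [Complex.neg_re, Complex.I_re, Complex.neg_im, Complex.I_im, neg_zero, zero_mul,
      neg_mul, one_mul, zero_sub, neg_neg]
    rw [Complex.im_sum]
    congr 1
    funext j
    simp [Complex.mul_im]
  rw [Real.norm_eq_abs, _root_.abs_of_nonneg (mul_nonneg (norm_nonneg _) (Real.exp_pos _).le), habs]
  have h2p : (0:ℝ) < 2 * p := by positivity
  calc Real.exp (∑ j, (z j).im * x j) * |f x| * Real.exp (a / (2 * p) * ‖x‖)
      ≤ Real.exp (a / (2 * p) * ‖x‖) * |f x| * Real.exp (a / (2 * p) * ‖x‖) := by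
        apply mul_le_mul_of_nonneg_right _ (Real.exp_pos _).le
        exact mul_le_mul_of_nonneg_right (Real.exp_le_exp.2 (hsum x)) (abs_nonneg _)
    _ = h x * |f x| := by
        rw [hhdef]
        have : a / (2 * p) * ‖x‖ + a / (2 * p) * ‖x‖ = a / p * ‖x‖ := by
          field_simp; ring
        show _ = Real.exp (a / p * ‖x‖) * |f x|
        rw [← this, Real.exp_add]; ring
end

section
/- Let μ be a finite Borel measure on ℝ satisfying ∫_ℝ e^{a|t|} dμ(t) < ∞ for some a > 0. Then μ is determinate: any finite Borel measure ν on ℝ with ∫ t^k dν = ∫ t^k dμ for all k ∈ ℕ equals μ. -/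
open MeasureTheory

open Filter Set Real
open scoped Topology FourierTransform RealInnerProductSpace SchwartzMap

namespace Det11

/-- `|t|^k ≤ k!/c^k · exp (c|t|)`. -/
lemma abs_pow_le (c : ℝ) (hc : 0 < c) (k : ℕ) (t : ℝ) :
    |t| ^ k ≤ (k.factorial : ℝ) / c ^ k * Real.exp (c * |t|) := by
  have h := Real.pow_div_factorial_le_exp (x := c * |t|) (by positivity) k
  have hck : (0:ℝ) < c ^ k := by positivity
  have hkf : (0:ℝ) < (k.factorial : ℝ) := by positivity
  rw [div_le_iff₀ hkf] at h
  calc |t| ^ k = (c * |t|) ^ k / c ^ k := by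
        rw [mul_pow]; field_simp
    _ ≤ Real.exp (c * |t|) * (k.factorial : ℝ) / c ^ k := by
        apply div_le_div_of_nonneg_right h hck.le |>.trans_eq rfl
    _ = (k.factorial : ℝ) / c ^ k * Real.exp (c * |t|) := by ring

/-- `|t| · exp (c|t|) ≤ (1/ε) exp ((c+ε)|t|)`. -/
lemma abs_mul_exp_le (c ε : ℝ) (hε : 0 < ε) (t : ℝ) :
    |t| * Real.exp (c * |t|) ≤ (1 / ε) * Real.exp ((c + ε) * |t|) := by
  have h1 : ε * |t| ≤ Real.exp (ε * |t|) := (Real.add_one_le_exp _).trans' (by nlinarith [abs_nonneg t])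
  have h2 : |t| ≤ (1/ε) * Real.exp (ε * |t|) := by
    rw [div_mul_eq_mul_div, le_div_iff₀ hε]; linarith
  calc |t| * Real.exp (c * |t|) ≤ ((1/ε) * Real.exp (ε * |t|)) * Real.exp (c * |t|) :=
        mul_le_mul_of_nonneg_right h2 (Real.exp_nonneg _)
    _ = (1 / ε) * Real.exp ((c + ε) * |t|) := by
        rw [mul_assoc, ← Real.exp_add]; ring_nf

lemma integrable_abs_pow {ρ : Measure ℝ} {c : ℝ} (hc : 0 < c)
    (h : Integrable (fun t => Real.exp (c * |t|)) ρ) (k : ℕ) :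
    Integrable (fun t : ℝ => |t| ^ k) ρ := by
  refine (h.const_mul ((k.factorial : ℝ) / c ^ k)).mono' ?_ ?_
  · exact ((continuous_abs.pow k)).aestronglyMeasurable
  · filter_upwards with t
    rw [Real.norm_eq_abs, abs_of_nonneg (by positivity)]
    exact abs_pow_le c hc k t

lemma integral_abs_pow_le {ρ : Measure ℝ} {c : ℝ} (hc : 0 < c)
    (h : Integrable (fun t => Real.exp (c * |t|)) ρ) (k : ℕ) :
    ∫ t, |t| ^ k ∂ρ ≤ (k.factorial : ℝ) / c ^ k * ∫ t, Real.exp (c * |t|) ∂ρ := by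
  rw [← integral_const_mul]
  exact integral_mono (integrable_abs_pow hc h k) (h.const_mul _) (abs_pow_le c hc k)

lemma nu_exp_integrable
    (μ : Measure ℝ) [IsFiniteMeasure μ]
    (a : ℝ) (ha : 0 < a)
    (hexp : Integrable (fun t => Real.exp (a * |t|)) μ)
    (ν : Measure ℝ) [IsFiniteMeasure ν]
    (hint : ∀ k : ℕ, Integrable (fun t => t ^ k) ν)
    (hmom : ∀ k : ℕ, ∫ t, t ^ k ∂ν = ∫ t, t ^ k ∂μ) :
    Integrable (fun t => Real.exp (a / 2 * |t|)) ν := by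
  set b := a / 2 with hb
  have hbpos : 0 < b := by positivity
  set C := ∫ t, Real.exp (a * |t|) ∂μ with hC
  have hC0 : 0 ≤ C := integral_nonneg fun t => (Real.exp_nonneg _)
  -- even moments of ν are bounded
  have heven : ∀ j : ℕ, ∫ t, t ^ (2 * j) ∂ν ≤ (2 * j).factorial / a ^ (2 * j) * C := by
    intro j
    rw [hmom (2 * j)]
    have h1 : ∫ t, t ^ (2 * j) ∂μ = ∫ t, |t| ^ (2 * j) ∂μ := by
      congr 1; ext t
      rw [pow_mul, pow_mul, sq_abs]
    rw [h1]
    exact integral_abs_pow_le ha hexp (2 * j)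
  -- the pointwise series bound
  have hptwise : ∀ t : ℝ, ENNReal.ofReal (Real.exp (b * |t|)) ≤
      ∑' j : ℕ, ENNReal.ofReal (2 * (b * t) ^ (2 * j) / (2 * j).factorial) := by
    intro t
    have hcosh : Real.exp (b * |t|) ≤ 2 * Real.cosh (b * t) := by
      rw [Real.cosh_eq]
      rcases abs_cases t with ⟨h1, _⟩ | ⟨h1, _⟩
      · rw [h1]; have := Real.exp_nonneg (-(b * t)); linarith
      · rw [h1, mul_neg]; have := Real.exp_nonneg (b * t); linarith
    have hsum : Real.cosh (b * t) = ∑' j : ℕ, (b * t) ^ (2 * j) / (2 * j).factorial :=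
      Real.cosh_eq_tsum (b * t)
    have hsummable : Summable (fun j : ℕ => (b * t) ^ (2 * j) / ((2 * j).factorial : ℝ)) :=
      (Real.hasSum_cosh (b * t)).summable
    calc ENNReal.ofReal (Real.exp (b * |t|))
        ≤ ENNReal.ofReal (∑' j : ℕ, 2 * ((b * t) ^ (2 * j) / (2 * j).factorial)) := by
          apply ENNReal.ofReal_le_ofReal
          rw [tsum_mul_left, ← hsum]; exact hcosh
      _ = ∑' j : ℕ, ENNReal.ofReal (2 * (b * t) ^ (2 * j) / (2 * j).factorial) := by
          rw [ENNReal.ofReal_tsum_of_nonneg]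
          · congr 1; ext j; congr 1; ring
          · intro j
            have h2 : (0:ℝ) ≤ (b * t) ^ (2 * j) := by
              rw [pow_mul]; positivity
            positivity
          · exact hsummable.mul_left 2
  -- each term's lintegral
  have hterm : ∀ j : ℕ, ∫⁻ t, ENNReal.ofReal (2 * (b * t) ^ (2 * j) / (2 * j).factorial) ∂ν
      ≤ ENNReal.ofReal (2 * C * (1/4) ^ j) := by
    intro j
    have hint' : Integrable (fun t => 2 * (b * t) ^ (2 * j) / ((2 * j).factorial : ℝ)) ν := by
      have := (hint (2 * j)).const_mul (2 * b ^ (2 * j) / ((2 * j).factorial : ℝ))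
      refine this.congr (Filter.Eventually.of_forall fun t => ?_)
      simp only [mul_pow]; ring
    rw [← ofReal_integral_eq_lintegral_ofReal hint' (Filter.Eventually.of_forall fun t => by
      have h2 : (0:ℝ) ≤ (b * t) ^ (2 * j) := by rw [pow_mul]; positivity
      positivity)]
    apply ENNReal.ofReal_le_ofReal
    have h3 : ∫ t, 2 * (b * t) ^ (2 * j) / ((2 * j).factorial : ℝ) ∂ν
        = 2 * b ^ (2 * j) / ((2 * j).factorial : ℝ) * ∫ t, t ^ (2 * j) ∂ν := by
      rw [← integral_const_mul]
      congr 1; ext t; rw [mul_pow]; ring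
    rw [h3]
    have h4 : (0:ℝ) ≤ 2 * b ^ (2 * j) / ((2 * j).factorial : ℝ) := by positivity
    calc 2 * b ^ (2 * j) / ((2 * j).factorial : ℝ) * ∫ t, t ^ (2 * j) ∂ν
        ≤ 2 * b ^ (2 * j) / ((2 * j).factorial : ℝ) * ((2 * j).factorial / a ^ (2 * j) * C) :=
          mul_le_mul_of_nonneg_left (heven j) h4
      _ = 2 * C * (b / a) ^ (2 * j) := by
          have hf : ((2 * j).factorial : ℝ) ≠ 0 := Nat.cast_ne_zero.2 (Nat.factorial_ne_zero _)
          field_simp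
          have ha' : a ^ (2 * j) ≠ 0 := pow_ne_zero _ ha.ne'
          rw [div_pow b a, mul_comm (a ^ _) C, mul_assoc, mul_div_assoc', mul_div_cancel_left₀ _ ha', mul_comm]
      _ = 2 * C * (1/4) ^ j := by
          rw [hb]
          have : a / 2 / a = 1 / 2 := by rw [div_div, div_eq_div_iff (by positivity) (by norm_num)]; ring
          rw [this]
          rw [pow_mul]
          norm_num
  -- total bound
  have htot : ∫⁻ t, ENNReal.ofReal (Real.exp (b * |t|)) ∂ν < ⊤ := by
    calc ∫⁻ t, ENNReal.ofReal (Real.exp (b * |t|)) ∂ν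
        ≤ ∫⁻ t, ∑' j : ℕ, ENNReal.ofReal (2 * (b * t) ^ (2 * j) / (2 * j).factorial) ∂ν :=
          lintegral_mono hptwise
      _ = ∑' j : ℕ, ∫⁻ t, ENNReal.ofReal (2 * (b * t) ^ (2 * j) / (2 * j).factorial) ∂ν := by
          apply lintegral_tsum
          intro j
          apply ENNReal.measurable_ofReal.comp_aemeasurable
          exact (Continuous.aemeasurable (by continuity))
      _ ≤ ∑' j : ℕ, ENNReal.ofReal (2 * C * (1/4) ^ j) := ENNReal.tsum_le_tsum hterm
      _ ≤ ∑' j : ℕ, ENNReal.ofReal (2 * C) * ENNReal.ofReal ((1/4)) ^ j := by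
          apply ENNReal.tsum_le_tsum
          intro j
          rw [ENNReal.ofReal_mul (by positivity), ← ENNReal.ofReal_pow (by norm_num)]
      _ = ENNReal.ofReal (2 * C) * ∑' j : ℕ, ENNReal.ofReal ((1/4)) ^ j := by
          rw [ENNReal.tsum_mul_left]
      _ < ⊤ := by
          apply ENNReal.mul_lt_top ENNReal.ofReal_lt_top
          rw [ENNReal.tsum_geometric]
          exact ENNReal.inv_lt_top.2 (tsub_pos_of_lt (ENNReal.ofReal_lt_one.2 (by norm_num)))
  refine ⟨(Real.continuous_exp.comp (continuous_const.mul continuous_abs)).aestronglyMeasurable, ?_⟩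
  rw [hasFiniteIntegral_iff_ofReal (Filter.Eventually.of_forall fun t => Real.exp_nonneg _)]
  exact htot

/-- The two-sided Laplace/characteristic transform. -/
noncomputable def charFn (ρ : Measure ℝ) (z : ℂ) : ℂ := ∫ t, Complex.exp (z * t) ∂ρ

lemma norm_cexp_mul (z : ℂ) (t : ℝ) : ‖Complex.exp (z * t)‖ = Real.exp (z.re * t) := by
  rw [Complex.norm_exp]
  congr 1
  simp [Complex.mul_re]

lemma integrable_cexp {ρ : Measure ℝ} {b : ℝ}
    (h : Integrable (fun t => Real.exp (b * |t|)) ρ) {z : ℂ} (hz : |z.re| ≤ b) :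
    Integrable (fun t : ℝ => Complex.exp (z * t)) ρ := by
  refine h.mono' ?_ ?_
  · exact (Complex.continuous_exp.comp (continuous_const.mul Complex.continuous_ofReal)).aestronglyMeasurable
  · filter_upwards with t
    rw [norm_cexp_mul]
    apply Real.exp_le_exp.2
    calc z.re * t ≤ |z.re * t| := le_abs_self _
      _ = |z.re| * |t| := abs_mul _ _
      _ ≤ b * |t| := mul_le_mul_of_nonneg_right hz (abs_nonneg t)

lemma analyticOnNhd_charFn {ρ : Measure ℝ} [IsFiniteMeasure ρ] {b : ℝ} (hb : 0 < b)
    (h : Integrable (fun t => Real.exp (b * |t|)) ρ) :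
    AnalyticOnNhd ℂ (charFn ρ) (Complex.re ⁻¹' Ioo (-b) b) := by
  have hopen : IsOpen (Complex.re ⁻¹' Ioo (-b) b) := isOpen_Ioo.preimage Complex.continuous_re
  apply DifferentiableOn.analyticOnNhd _ hopen
  intro z₀ hz₀
  apply DifferentiableAt.differentiableWithinAt
  simp only [mem_preimage, mem_Ioo] at hz₀
  have habs : |z₀.re| < b := abs_lt.2 ⟨by linarith [hz₀.1], hz₀.2⟩
  set ε := (b - |z₀.re|) / 2 with hε
  have hεpos : 0 < ε := by simp only [hε]; linarith
  have key := hasDerivAt_integral_of_dominated_loc_of_deriv_le (μ := ρ)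
      (F := fun (z : ℂ) (t : ℝ) => Complex.exp (z * t))
      (F' := fun (z : ℂ) (t : ℝ) => Complex.exp (z * t) * t)
      (x₀ := z₀) (s := Metric.ball z₀ ε) (bound := fun t => (1 / ε) * Real.exp (b * |t|)) (Metric.ball_mem_nhds z₀ hεpos)
      ?_ ?_ ?_ ?_ ?_ ?_
  · exact key.2.differentiableAt
  · filter_upwards with z
    exact (Complex.continuous_exp.comp (continuous_const.mul Complex.continuous_ofReal)).aestronglyMeasurable
  · exact integrable_cexp h habs.le
  · exact ((Complex.continuous_exp.comp (continuous_const.mul Complex.continuous_ofReal)).mul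
      Complex.continuous_ofReal).aestronglyMeasurable
  · filter_upwards with t z hz
    rw [norm_mul, norm_cexp_mul, Complex.norm_real, Real.norm_eq_abs]
    have h1 : |z.re| ≤ |z₀.re| + ε := by
      have h2 : |z.re - z₀.re| ≤ ‖z - z₀‖ := by
        rw [← Complex.sub_re]
        exact Complex.abs_re_le_norm _
      have h3 : ‖z - z₀‖ < ε := mem_ball_iff_norm.1 hz
      calc |z.re| ≤ |z₀.re| + |z.re - z₀.re| := by
            have := abs_sub_abs_le_abs_sub z.re z₀.re; linarith
        _ ≤ |z₀.re| + ε := by linarith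
    calc Real.exp (z.re * t) * |t| ≤ Real.exp ((|z₀.re| + ε) * |t|) * |t| := by
          apply mul_le_mul_of_nonneg_right _ (abs_nonneg t)
          apply Real.exp_le_exp.2
          calc z.re * t ≤ |z.re| * |t| := (le_abs_self _).trans (abs_mul _ _).le
            _ ≤ (|z₀.re| + ε) * |t| := mul_le_mul_of_nonneg_right h1 (abs_nonneg t)
      _ = |t| * Real.exp ((|z₀.re| + ε) * |t|) := mul_comm _ _
      _ ≤ (1 / ε) * Real.exp ((|z₀.re| + ε + ε) * |t|) := abs_mul_exp_le _ _ hεpos t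
      _ = (1 / ε) * Real.exp (b * |t|) := by
          congr 3
          simp only [hε]; ring
  · exact h.const_mul _
  · filter_upwards with t z _
    have h1 : HasDerivAt (fun z : ℂ => z * t) ((t : ℂ)) z := hasDerivAt_mul_const _
    simpa using h1.cexp

lemma charFn_real_eq {ρ : Measure ℝ} [IsFiniteMeasure ρ] {b : ℝ} (hb : 0 < b)
    (h : Integrable (fun t => Real.exp (b * |t|)) ρ) {s : ℝ} (hs : |s| < b) :
    charFn ρ (s : ℂ) = ∑' k : ℕ, ((s : ℂ) ^ k / k.factorial) * ((∫ t, t ^ k ∂ρ : ℝ) : ℂ) := by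
  set C := ∫ t, Real.exp (b * |t|) ∂ρ with hC
  have hC0 : 0 ≤ C := integral_nonneg fun t => Real.exp_nonneg _
  set f : ℕ → ℝ → ℂ := fun k t => ((s : ℂ) ^ k / k.factorial) * ((t : ℝ) : ℂ) ^ k with hf
  have hmeas : ∀ k, AEStronglyMeasurable (f k) ρ := by
    intro k
    exact (continuous_const.mul ((Complex.continuous_ofReal).pow k)).aestronglyMeasurable
  have hnorm : ∀ k (t : ℝ), ‖f k t‖ = |s| ^ k / k.factorial * |t| ^ k := by
    intro k t
    simp only [hf, norm_mul, norm_div, norm_pow, Complex.norm_real, Real.norm_eq_abs]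
    congr 2
    simp [Complex.norm_natCast]
  have hlint : ∀ k, ∫⁻ t, ‖f k t‖₊ ∂ρ
      = ENNReal.ofReal (|s| ^ k / k.factorial * ∫ t, |t| ^ k ∂ρ) := by
    intro k
    have hint' : Integrable (fun t : ℝ => |s| ^ k / k.factorial * |t| ^ k) ρ :=
      (integrable_abs_pow hb h k).const_mul _
    calc ∫⁻ t, ‖f k t‖₊ ∂ρ
        = ∫⁻ t, ENNReal.ofReal (|s| ^ k / k.factorial * |t| ^ k) ∂ρ := by
          apply lintegral_congr
          intro t
          rw [← hnorm]; exact (ENNReal.ofReal_eq_coe_nnreal (norm_nonneg _)).symm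
      _ = ENNReal.ofReal (∫ t, |s| ^ k / k.factorial * |t| ^ k ∂ρ) :=
          (ofReal_integral_eq_lintegral_ofReal hint'
            (Filter.Eventually.of_forall fun t => by positivity)).symm
      _ = ENNReal.ofReal (|s| ^ k / ↑k.factorial * ∫ t, |t| ^ k ∂ρ) := by
          rw [integral_const_mul]
  have hbdd : ∑' k, ∫⁻ t, ‖f k t‖₊ ∂ρ ≠ ⊤ := by
    apply ne_top_of_le_ne_top (b := ENNReal.ofReal C * (1 - ENNReal.ofReal (|s| / b))⁻¹)
    · exact ENNReal.mul_ne_top ENNReal.ofReal_ne_top (ENNReal.inv_ne_top.2 (by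
        simp only [ne_eq, tsub_eq_zero_iff_le, not_le]
        exact ENNReal.ofReal_lt_one.2 (div_lt_one hb |>.2 hs)))
    · calc ∑' k, ∫⁻ t, ‖f k t‖₊ ∂ρ
          ≤ ∑' k : ℕ, ENNReal.ofReal (C * (|s| / b) ^ k) := by
            apply ENNReal.tsum_le_tsum
            intro k
            rw [hlint k]
            apply ENNReal.ofReal_le_ofReal
            have h1 : ∫ t, |t| ^ k ∂ρ ≤ (k.factorial : ℝ) / b ^ k * C :=
              integral_abs_pow_le hb h k
            have h2 : (0:ℝ) ≤ |s| ^ k / k.factorial := by positivity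
            calc |s| ^ k / k.factorial * ∫ t, |t| ^ k ∂ρ
                ≤ |s| ^ k / k.factorial * ((k.factorial : ℝ) / b ^ k * C) :=
                  mul_le_mul_of_nonneg_left h1 h2
              _ = C * (|s| / b) ^ k := by
                  have hfk : (k.factorial : ℝ) ≠ 0 := Nat.cast_ne_zero.2 k.factorial_ne_zero
                  rw [div_pow]
                  field_simp
        _ ≤ ∑' k : ℕ, ENNReal.ofReal C * ENNReal.ofReal (|s| / b) ^ k := by
            apply ENNReal.tsum_le_tsum
            intro k
            rw [ENNReal.ofReal_mul hC0, ← ENNReal.ofReal_pow (by positivity)]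
        _ = ENNReal.ofReal C * (1 - ENNReal.ofReal (|s| / b))⁻¹ := by
            rw [ENNReal.tsum_mul_left, ENNReal.tsum_geometric]
  have hsum := integral_tsum hmeas hbdd
  have hexp : ∀ t : ℝ, Complex.exp ((s : ℂ) * t) = ∑' k, f k t := by
    intro t
    rw [Complex.exp_eq_exp_ℂ, NormedSpace.exp_eq_tsum_div]
    apply tsum_congr
    intro k
    simp only [hf]
    rw [mul_pow]
    ring
  calc charFn ρ (s : ℂ) = ∫ t, ∑' k, f k t ∂ρ := by
        unfold charFn
        congr 1; ext t; exact hexp t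
    _ = ∑' k, ∫ t, f k t ∂ρ := hsum
    _ = ∑' k : ℕ, ((s : ℂ) ^ k / k.factorial) * ((∫ t, t ^ k ∂ρ : ℝ) : ℂ) := by
        congr 1; ext k
        simp only [hf]
        rw [integral_const_mul]
        congr 1
        simp_rw [← Complex.ofReal_pow]
        exact integral_ofReal

lemma charFn_eq_on_imaginary
    {μ ν : Measure ℝ} [IsFiniteMeasure μ] [IsFiniteMeasure ν] {b : ℝ} (hb : 0 < b)
    (hμ : Integrable (fun t => Real.exp (b * |t|)) μ)
    (hν : Integrable (fun t => Real.exp (b * |t|)) ν)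
    (hmom : ∀ k : ℕ, ∫ t, t ^ k ∂ν = ∫ t, t ^ k ∂μ) :
    ∀ y : ℝ, charFn ν (Complex.I * y) = charFn μ (Complex.I * y) := by
  set S : Set ℂ := Complex.re ⁻¹' Ioo (-b) b with hS
  set G : ℂ → ℂ := fun z => charFn ν z - charFn μ z with hG
  have hGanalytic : AnalyticOnNhd ℂ G S :=
    fun z hz => ((analyticOnNhd_charFn hb hν z hz).sub (analyticOnNhd_charFn hb hμ z hz))
  have hconv : Convex ℝ S := (convex_Ioo (-b) b).linear_preimage Complex.reLm
  have hpre : IsPreconnected S := hconv.isPreconnected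
  have h0 : (0 : ℂ) ∈ S := by simp [hS, hb]
  -- G vanishes at the real points b/2 * (1/(n+1))
  have hreal : ∀ s : ℝ, |s| < b → G (s : ℂ) = 0 := by
    intro s hs
    rw [hG]
    simp only
    rw [charFn_real_eq hb hν hs, charFn_real_eq hb hμ hs, sub_eq_zero]
    congr 1
    ext k
    rw [hmom k]
  have hfreq : ∃ᶠ z in 𝓝[≠] (0 : ℂ), G z = 0 := by
    set u : ℕ → ℂ := fun n => ((b / 2 * (1 / (n + 1)) : ℝ) : ℂ) with hu
    have hlim : Tendsto u atTop (𝓝[≠] (0 : ℂ)) := by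
      apply tendsto_nhdsWithin_of_tendsto_nhds_of_eventually_within
      · have h1 : Tendsto (fun n : ℕ => b / 2 * (1 / (n + 1))) atTop (𝓝 (b / 2 * 0)) :=
          tendsto_one_div_add_atTop_nhds_zero_nat.const_mul _
        rw [mul_zero] at h1
        have h2 : Tendsto u atTop (𝓝 (((0:ℝ) : ℂ))) :=
          (Complex.continuous_ofReal.tendsto 0).comp h1
        simpa using h2
      · filter_upwards with n
        simp only [hu, mem_compl_iff, mem_singleton_iff]
        rw [show ¬((b / 2 * (1 / (↑n + 1)) : ℝ) : ℂ) = 0 ↔ ¬(b / 2 * (1 / (↑n + 1)) : ℝ) = 0 from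
          not_congr Complex.ofReal_eq_zero]
        positivity
    apply hlim.frequently
    apply Frequently.of_forall
    intro n
    apply hreal
    rw [abs_of_pos (by positivity)]
    calc b / 2 * (1 / (n + 1 : ℝ)) ≤ b / 2 * 1 := by
          apply mul_le_mul_of_nonneg_left _ (by positivity)
          rw [div_le_one (by positivity)]
          simp
      _ < b := by linarith
  have hEq := hGanalytic.eqOn_zero_of_preconnected_of_frequently_eq_zero hpre h0 hfreq
  intro y
  have hy : (Complex.I * y) ∈ S := by
    simp [hS]
    exact hb
  have := hEq hy
  simp only [hG, Pi.zero_apply, sub_eq_zero] at this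
  exact this

lemma integral_eq_of_charFn_eq {μ ν : Measure ℝ} [IsFiniteMeasure μ] [IsFiniteMeasure ν]
    (hchar : ∀ y : ℝ, charFn ν (Complex.I * y) = charFn μ (Complex.I * y))
    (f : ℝ → ℂ) (hf : Continuous f) (hfi : Integrable f volume)
    (hFf : Integrable (𝓕 f) volume) :
    ∫ x, f x ∂ν = ∫ x, f x ∂μ := by
  set g : ℝ → ℂ := 𝓕 f with hg
  have key : ∀ (ρ : Measure ℝ), IsFiniteMeasure ρ →
      ∫ x, f x ∂ρ = ∫ ξ : ℝ, charFn ρ (Complex.I * ((2 * π * ξ : ℝ) : ℂ)) * g ξ := by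
    intro ρ hρ
    set H : ℝ → ℝ → ℂ := fun x ξ => Complex.exp (((2 * π * (ξ * x) : ℝ) : ℂ) * Complex.I) * g ξ
      with hH
    have hinv : ∀ x : ℝ, f x = ∫ ξ : ℝ, H x ξ := by
      intro x
      conv_lhs => rw [← hf.fourierInv_fourier_eq hfi hFf]
      rw [Real.fourierInv_eq']
      apply integral_congr_ae
      filter_upwards with ξ
      rw [hH, smul_eq_mul]
      norm_num [RCLike.inner_apply]
      rw [mul_comm (x : ℂ) (ξ : ℂ), hg]
    have hnormH : ∀ x ξ, ‖H x ξ‖ = ‖g ξ‖ := by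
      intro x ξ
      rw [hH]
      simp only [norm_mul]
      rw [Complex.norm_exp]
      simp
    have hcont : ∀ x : ℝ, Continuous (fun ξ : ℝ => Complex.exp (((2 * π * (ξ * x) : ℝ) : ℂ) * Complex.I)) := by
      intro x
      apply Complex.continuous_exp.comp
      apply Continuous.mul _ continuous_const
      exact Complex.continuous_ofReal.comp (by continuity)
    have hmeasH : AEStronglyMeasurable (Function.uncurry H) (ρ.prod volume) := by
      apply AEStronglyMeasurable.mul
      · apply Continuous.aestronglyMeasurable
        apply Complex.continuous_exp.comp
        apply Continuous.mul _ continuous_const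
        exact Complex.continuous_ofReal.comp (by continuity)
      · exact (hFf.1).comp_snd
    have hprod : Integrable (Function.uncurry H) (ρ.prod volume) := by
      rw [integrable_prod_iff hmeasH]
      constructor
      · filter_upwards with x
        apply hFf.bdd_mul (c := 1) ((hcont x).aestronglyMeasurable)
        refine Filter.Eventually.of_forall (fun ξ => ?_)
        rw [Complex.norm_exp]
        simp
      · apply Integrable.congr (integrable_const (∫ ξ, ‖g ξ‖))
        filter_upwards with x
        apply integral_congr_ae
        filter_upwards with ξ
        exact (hnormH x ξ).symm
    calc ∫ x, f x ∂ρ = ∫ x, (∫ ξ : ℝ, H x ξ) ∂ρ := by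
          apply integral_congr_ae
          filter_upwards with x
          exact hinv x
      _ = ∫ ξ : ℝ, (∫ x, H x ξ ∂ρ) := integral_integral_swap hprod
      _ = ∫ ξ : ℝ, charFn ρ (Complex.I * ((2 * π * ξ : ℝ) : ℂ)) * g ξ := by
          apply integral_congr_ae
          filter_upwards with ξ
          rw [hH]
          simp only
          rw [integral_mul_const]
          congr 1
          unfold charFn
          apply integral_congr_ae
          filter_upwards with x
          congr 1
          push_cast
          ring
  rw [key μ inferInstance, key ν inferInstance]
  apply integral_congr_ae
  filter_upwards with ξ
  rw [hchar (2 * π * ξ)]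

/-- Package a smooth compactly supported function as a Schwartz map. -/
noncomputable def toSchwartz (f : ℝ → ℂ) (h1 : ContDiff ℝ ((⊤ : ℕ∞)) f) (h2 : HasCompactSupport f) :
    SchwartzMap ℝ ℂ where
  toFun := f
  smooth' := h1
  decay' := by
    intro k n
    have hg : Continuous fun x : ℝ => ‖x‖ ^ k * ‖iteratedFDeriv ℝ n f x‖ := by
      apply Continuous.mul (by continuity)
      exact (h1.continuous_iteratedFDeriv (mod_cast le_top)).norm
    have hcs : HasCompactSupport fun x : ℝ => ‖x‖ ^ k * ‖iteratedFDeriv ℝ n f x‖ := by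
      apply HasCompactSupport.mul_left
      exact (h2.iteratedFDeriv n).norm
    obtain ⟨C, hC⟩ := hg.bounded_above_of_compact_support hcs
    refine ⟨C, fun x => ?_⟩
    have := hC x
    rw [Real.norm_eq_abs] at this
    exact (le_abs_self _).trans this

lemma fourier_integrable (f : ℝ → ℂ) (h1 : ContDiff ℝ ((⊤ : ℕ∞)) f) (h2 : HasCompactSupport f) :
    Integrable (𝓕 f) volume := by
  have h3 : 𝓕 f = 𝓕 (⇑(toSchwartz f h1 h2)) := rfl
  rw [h3, ← SchwartzMap.fourier_coe]
  exact SchwartzMap.integrable _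

/-- The bump functions approximating the indicator of `Iic x`. -/
noncomputable def bump (x : ℝ) (n : ℕ) : ContDiffBump (x - (n + 1 : ℝ) / 2) where
  rIn := (n + 1 : ℝ) / 2
  rOut := (n + 1 : ℝ) / 2 + 1 / (n + 1 : ℝ)
  rIn_pos := by positivity
  rIn_lt_rOut := by
    have : (0:ℝ) < 1 / (n + 1 : ℝ) := by positivity
    linarith

lemma bump_tendsto (x t : ℝ) :
    Tendsto (fun n => bump x n t) atTop (𝓝 (Set.indicator (Iic x) (fun _ => (1:ℝ)) t)) := by
  rcases le_or_gt t x with ht | ht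
  · rw [Set.indicator_of_mem (by simpa using ht)]
    apply tendsto_const_nhds.congr'
    rw [eventuallyEq_iff_exists_mem]
    refine ⟨{n : ℕ | x - t ≤ n + 1}, ?_, ?_⟩
    · rw [mem_atTop_sets]
      refine ⟨⌈x - t⌉₊, fun n hn => ?_⟩
      simp only [mem_setOf_eq]
      calc x - t ≤ ⌈x - t⌉₊ := Nat.le_ceil _
        _ ≤ (n : ℝ) := by exact_mod_cast hn
        _ ≤ n + 1 := by linarith
    · intro n hn
      simp only [mem_setOf_eq] at hn
      symm
      apply ContDiffBump.one_of_mem_closedBall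
      rw [Metric.mem_closedBall, Real.dist_eq, abs_le]
      constructor <;> simp only [bump] <;> linarith
  · rw [Set.indicator_of_notMem (by simpa using ht)]
    apply tendsto_const_nhds.congr'
    rw [eventuallyEq_iff_exists_mem]
    refine ⟨{n : ℕ | 1 / (t - x) ≤ n + 1}, ?_, ?_⟩
    · rw [mem_atTop_sets]
      refine ⟨⌈1 / (t - x)⌉₊, fun n hn => ?_⟩
      simp only [mem_setOf_eq]
      calc 1 / (t - x) ≤ ⌈1 / (t - x)⌉₊ := Nat.le_ceil _
        _ ≤ (n : ℝ) := by exact_mod_cast hn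
        _ ≤ n + 1 := by linarith
    · intro n hn
      simp only [mem_setOf_eq] at hn
      symm
      apply ContDiffBump.zero_of_le_dist
      rw [Real.dist_eq]
      have htx : 0 < t - x := by linarith
      have h1 : 1 / (n + 1 : ℝ) ≤ t - x := by
        rw [div_le_iff₀ (by positivity)] at hn ⊢
        · nlinarith
      have h2 : t - (x - (n + 1 : ℝ) / 2) = (t - x) + (n + 1 : ℝ) / 2 := by ring
      simp only [bump]
      rw [abs_of_pos (by linarith)]
      linarith

lemma measure_Iic_eq {μ ν : Measure ℝ} [IsFiniteMeasure μ] [IsFiniteMeasure ν]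
    (h : ∀ (f : ℝ → ℂ), Continuous f → Integrable f volume → Integrable (𝓕 f) volume →
      ∫ t, f t ∂ν = ∫ t, f t ∂μ) (x : ℝ) :
    ν (Iic x) = μ (Iic x) := by
  have key : ∀ (ρ : Measure ℝ), IsFiniteMeasure ρ →
      Tendsto (fun n => ∫ t, ((bump x n t : ℝ) : ℂ) ∂ρ) atTop
        (𝓝 (((ρ (Iic x)).toReal : ℝ) : ℂ)) := by
    intro ρ hρ
    have h0 : (((ρ (Iic x)).toReal : ℝ) : ℂ) = ∫ t, Set.indicator (Iic x) (fun _ => (1:ℂ)) t ∂ρ := by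
      rw [integral_indicator_const _ measurableSet_Iic]
      simp
      rfl
    rw [h0]
    apply tendsto_integral_of_dominated_convergence (bound := fun _ => (1:ℝ))
    · intro n
      exact (Complex.continuous_ofReal.comp (bump x n).continuous).aestronglyMeasurable
    · exact integrable_const 1
    · intro n
      filter_upwards with t
      rw [Complex.norm_real, Real.norm_eq_abs, abs_of_nonneg (bump x n).nonneg]
      exact (bump x n).le_one
    · filter_upwards with t
      have h1 := (Complex.continuous_ofReal.tendsto _).comp (bump_tendsto x t)
      have h2 : ((Set.indicator (Iic x) (fun _ => (1:ℝ)) t : ℝ) : ℂ)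
          = Set.indicator (Iic x) (fun _ => (1:ℂ)) t := by
        by_cases h : t ∈ Iic x <;> simp [h]
      rw [h2] at h1
      exact h1
  have heq : ∀ n : ℕ, ∫ t, ((bump x n t : ℝ) : ℂ) ∂ν = ∫ t, ((bump x n t : ℝ) : ℂ) ∂μ := by
    intro n
    have hcont : Continuous fun t : ℝ => ((bump x n t : ℝ) : ℂ) :=
      Complex.continuous_ofReal.comp (bump x n).continuous
    have hcs : HasCompactSupport fun t : ℝ => ((bump x n t : ℝ) : ℂ) :=
      (bump x n).hasCompactSupport.comp_left Complex.ofReal_zero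
    have hsmooth : ContDiff ℝ ((⊤ : ℕ∞)) fun t : ℝ => ((bump x n t : ℝ) : ℂ) := by
      exact Complex.ofRealCLM.contDiff.comp (bump x n).contDiff
    exact h _ hcont (hcont.integrable_of_hasCompactSupport hcs)
      (fourier_integrable _ hsmooth hcs)
  have h1 := key ν inferInstance
  have h2 := key μ inferInstance
  rw [funext heq] at h1
  have h3 := tendsto_nhds_unique h1 h2
  rw [Complex.ofReal_inj] at h3
  exact (ENNReal.toReal_eq_toReal_iff' (measure_ne_top ν _) (measure_ne_top μ _)).1 h3

end Det11

/-- A finite Borel measure on `ℝ` with `∫ e^{a|t|} dμ < ∞` for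
some `a > 0` is determinate (Hamburger moment problem). -/
theorem determinate_of_exponentially_bounded_real
    (μ : Measure ℝ) [IsFiniteMeasure μ]
    (a : ℝ) (ha : 0 < a)
    (hexp : Integrable (fun t => Real.exp (a * |t|)) μ)
    (ν : Measure ℝ) [IsFiniteMeasure ν]
    (hint : ∀ k : ℕ, Integrable (fun t => t ^ k) ν)
    (hmom : ∀ k : ℕ, ∫ t, t ^ k ∂ν = ∫ t, t ^ k ∂μ) :
    ν = μ := by
  have hb : 0 < a / 2 := by positivity
  have hμb : Integrable (fun t => Real.exp (a / 2 * |t|)) μ := by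
    refine hexp.mono'
      ((Real.continuous_exp.comp (continuous_const.mul continuous_abs)).aestronglyMeasurable) ?_
    filter_upwards with t
    rw [Real.norm_eq_abs, abs_of_nonneg (Real.exp_nonneg _)]
    apply Real.exp_le_exp.2
    have := abs_nonneg t
    nlinarith
  have hνb := Det11.nu_exp_integrable μ a ha hexp ν hint hmom
  have hchar := Det11.charFn_eq_on_imaginary hb hμb hνb hmom
  apply MeasureTheory.Measure.ext_of_Iic
  intro x
  exact Det11.measure_Iic_eq
    (fun f hf hfi hFf => Det11.integral_eq_of_charFn_eq hchar f hf hfi hFf) x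
end

section
/- Let μ be a finite Borel measure on ℝ² = [0,∞) × ℝ in polar form, i.e., a finite Borel measure on [0,∞) × [0,2π) with all moments ∫ r^n θ^m dμ finite, such that the angular marginal (supported in the compact set [0,2π]) and the radial marginal on [0,∞) are both determinate on their respective domains. Then μ is determinate on [0,∞) × [0,2π]. -/
open MeasureTheory
open scoped ENNReal NNReal

/-- One-dimensional determinacy on `K ⊆ ℝ`. -/
def DeterminateOn (K : Set ℝ) (μ : Measure ℝ) : Prop :=
  ∀ ν : Measure ℝ, IsFiniteMeasure ν → ν Kᶜ = 0 →
    (∀ k : ℕ, Integrable (fun t => t ^ k) ν) →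
    (∀ k : ℕ, ∫ t, t ^ k ∂ν = ∫ t, t ^ k ∂μ) → ν = μ

namespace PolarAux

open Set

noncomputable section

/-- The polar rectangle. -/
def rect : Set (ℝ × ℝ) := Set.Ici (0:ℝ) ×ˢ Set.Icc (0:ℝ) (2 * Real.pi)

lemma ae_mem_rect {κ : Measure (ℝ × ℝ)} (h : κ rectᶜ = 0) : ∀ᵐ z ∂κ, z ∈ rect := by
  rw [ae_iff]
  exact h

lemma cancel {α : Type*} [MeasurableSpace α] (a b c : Measure α) [IsFiniteMeasure c]
    (h : a + c = b + c) : a = b := by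
  ext s hs
  have h2 : a s + c s = b s + c s := by
    rw [← Measure.add_apply, ← Measure.add_apply, h]
  exact WithTop.add_right_cancel (measure_ne_top c s) h2

/-- weighted fst-marginal. -/
def lam (κ : Measure (ℝ × ℝ)) (w : ℝ → ℝ) : Measure ℝ :=
  (κ.withDensity (fun z => ((w z.2).toNNReal : ℝ≥0∞))).map Prod.fst

variable {κ : Measure (ℝ × ℝ)} {w : ℝ → ℝ}

lemma lam_fin [IsFiniteMeasure κ] (h0 : κ rectᶜ = 0) (hw : Measurable w)
    (hw01 : ∀ θ ∈ Set.Icc (0:ℝ) (2 * Real.pi), 0 ≤ w θ ∧ w θ ≤ 1) :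
    IsFiniteMeasure (lam κ w) := by
  constructor
  rw [lam, Measure.map_apply measurable_fst MeasurableSet.univ, Set.preimage_univ,
    withDensity_apply _ MeasurableSet.univ, Measure.restrict_univ]
  calc ∫⁻ z, ((w z.2).toNNReal : ℝ≥0∞) ∂κ ≤ ∫⁻ _, 1 ∂κ := by
        refine lintegral_mono_ae ((ae_mem_rect h0).mono fun z hz => ?_)
        have : w z.2 ≤ 1 := (hw01 _ hz.2).2
        simpa [ENNReal.ofReal] using ENNReal.ofReal_le_one.mpr this
    _ < ⊤ := by simpa using measure_lt_top κ Set.univ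

lemma lam_supp (h0 : κ rectᶜ = 0) :
    lam κ w (Set.Ici (0:ℝ))ᶜ = 0 := by
  rw [lam, Measure.map_apply measurable_fst measurableSet_Ici.compl,
    withDensity_apply _ (measurable_fst measurableSet_Ici.compl)]
  have hnull : κ (Prod.fst ⁻¹' (Set.Ici (0:ℝ))ᶜ) = 0 := by
    refine measure_mono_null (fun z hz => ?_) h0
    intro hmem
    exact hz hmem.1
  rw [Measure.restrict_eq_zero.mpr hnull, lintegral_zero_measure]

lemma lam_integrable [IsFiniteMeasure κ] (h0 : κ rectᶜ = 0) (hw : Measurable w)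
    (hw01 : ∀ θ ∈ Set.Icc (0:ℝ) (2 * Real.pi), 0 ≤ w θ ∧ w θ ≤ 1)
    (k : ℕ) (hik : Integrable (fun z : ℝ × ℝ => z.1 ^ k) κ) :
    Integrable (fun t => t ^ k) (lam κ w) := by
  rw [lam, integrable_map_measure ((measurable_id'.pow_const k).aestronglyMeasurable)
    measurable_fst.aemeasurable]
  have hd : Measurable (fun z : ℝ × ℝ => (w z.2).toNNReal) :=
    (hw.comp measurable_snd).real_toNNReal
  rw [show ((fun t : ℝ => t ^ k) ∘ Prod.fst) = fun z : ℝ × ℝ => z.1 ^ k from rfl]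
  rw [integrable_withDensity_iff_integrable_smul₀ hd.aemeasurable]
  refine Integrable.mono' hik.abs ?_ ?_
  · exact ((hd.coe_nnreal_real.mul (measurable_fst.pow_const k)).aestronglyMeasurable).congr
      (Filter.Eventually.of_forall fun z => by simp [NNReal.smul_def])
  · refine (ae_mem_rect h0).mono fun z hz => ?_
    have h1 : ((w z.2).toNNReal : ℝ) ≤ 1 := by
      have := Real.toNNReal_le_one.mpr (hw01 _ hz.2).2
      exact_mod_cast this
    have h2 : (0:ℝ) ≤ ((w z.2).toNNReal : ℝ) := (w z.2).toNNReal.coe_nonneg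
    rw [NNReal.smul_def, smul_eq_mul]
    rw [norm_mul]
    calc ‖((w z.2).toNNReal : ℝ)‖ * ‖z.1 ^ k‖ ≤ 1 * ‖z.1 ^ k‖ := by
          apply mul_le_mul_of_nonneg_right _ (norm_nonneg _)
          rwa [Real.norm_of_nonneg h2]
      _ = |z.1 ^ k| := by rw [one_mul, Real.norm_eq_abs]

lemma lam_integral [IsFiniteMeasure κ] (h0 : κ rectᶜ = 0) (hw : Measurable w)
    (hw01 : ∀ θ ∈ Set.Icc (0:ℝ) (2 * Real.pi), 0 ≤ w θ ∧ w θ ≤ 1)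
    (k : ℕ) :
    ∫ t, t ^ k ∂(lam κ w) = ∫ z, w z.2 * z.1 ^ k ∂κ := by
  rw [lam, integral_map measurable_fst.aemeasurable
    ((measurable_id'.pow_const k).aestronglyMeasurable)]
  have hd : Measurable (fun z : ℝ × ℝ => (w z.2).toNNReal) :=
    (hw.comp measurable_snd).real_toNNReal
  rw [integral_withDensity_eq_integral_smul₀ hd.aemeasurable]
  refine integral_congr_ae ((ae_mem_rect h0).mono fun z hz => ?_)
  have hnn : 0 ≤ w z.2 := (hw01 _ hz.2).1
  simp [NNReal.smul_def, Real.coe_toNNReal _ hnn]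

end

end PolarAux


namespace PolarAux

open Set

lemma step1 (μ ν : Measure (ℝ × ℝ)) [IsFiniteMeasure μ] [IsFiniteMeasure ν]
    (hμ0 : μ rectᶜ = 0) (hν0 : ν rectᶜ = 0)
    (hμmom : ∀ n m : ℕ, Integrable (fun z : ℝ × ℝ => z.1 ^ n * z.2 ^ m) μ)
    (hνmom : ∀ n m : ℕ, Integrable (fun z : ℝ × ℝ => z.1 ^ n * z.2 ^ m) ν)
    (hrad : DeterminateOn (Set.Ici 0) (Measure.map Prod.fst μ))
    (heq : ∀ n m : ℕ, ∫ z, z.1 ^ n * z.2 ^ m ∂ν = ∫ z, z.1 ^ n * z.2 ^ m ∂μ)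
    (m : ℕ) {B : Set ℝ} (hB : MeasurableSet B) :
    ∫ z in Prod.fst ⁻¹' B, z.2 ^ m ∂ν = ∫ z in Prod.fst ⁻¹' B, z.2 ^ m ∂μ := by
  have hc : (0:ℝ) < 2 * Real.pi := by positivity
  set c : ℝ := 2 * Real.pi with hcdef
  set w : ℝ → ℝ := fun θ => (θ / c) ^ m with hwdef
  have hw : Measurable w := (measurable_id'.div_const c).pow_const m
  have hw01 : ∀ θ ∈ Set.Icc (0:ℝ) c, 0 ≤ w θ ∧ w θ ≤ 1 := fun θ hθ =>
    ⟨pow_nonneg (div_nonneg hθ.1 hc.le) m,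
     pow_le_one₀ (div_nonneg hθ.1 hc.le) ((div_le_one hc).mpr hθ.2)⟩
  set w' : ℝ → ℝ := fun θ => 1 - w θ with hw'def
  have hw' : Measurable w' := measurable_const.sub hw
  have hw'01 : ∀ θ ∈ Set.Icc (0:ℝ) c, 0 ≤ w' θ ∧ w' θ ≤ 1 := fun θ hθ => by
    have h := hw01 θ hθ
    constructor <;> simp [hw'def] <;> linarith [h.1, h.2]
  -- integrability of pure radial moments
  have hikν : ∀ k : ℕ, Integrable (fun z : ℝ × ℝ => z.1 ^ k) ν := fun k => by
    simpa using hνmom k 0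
  have hikμ : ∀ k : ℕ, Integrable (fun z : ℝ × ℝ => z.1 ^ k) μ := fun k => by
    simpa using hμmom k 0
  -- the test measure
  set ρ : Measure ℝ := lam ν w + lam μ w' with hρdef
  haveI h1fin : IsFiniteMeasure (lam ν w) := lam_fin hν0 hw hw01
  haveI h2fin : IsFiniteMeasure (lam μ w') := lam_fin hμ0 hw' hw'01
  haveI h2fin' : IsFiniteMeasure (lam μ w) := lam_fin hμ0 hw hw01
  haveI hρfin : IsFiniteMeasure ρ := by rw [hρdef]; infer_instance
  have hρsupp : ρ (Set.Ici (0:ℝ))ᶜ = 0 := by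
    rw [hρdef, Measure.add_apply, lam_supp hν0, lam_supp hμ0, add_zero]
  have hρint : ∀ k : ℕ, Integrable (fun t : ℝ => t ^ k) ρ := fun k =>
    (lam_integrable hν0 hw hw01 k (hikν k)).add_measure
      (lam_integrable hμ0 hw' hw'01 k (hikμ k))
  -- pointwise identity
  have hptw : ∀ (z : ℝ × ℝ) (k : ℕ), w z.2 * z.1 ^ k = (c ^ m)⁻¹ * (z.1 ^ k * z.2 ^ m) := by
    intro z k
    simp only [hwdef, div_pow]
    ring
  have hρmom : ∀ k : ℕ, ∫ t, t ^ k ∂ρ = ∫ t, t ^ k ∂(Measure.map Prod.fst μ) := by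
    intro k
    rw [hρdef, integral_add_measure (lam_integrable hν0 hw hw01 k (hikν k))
      (lam_integrable hμ0 hw' hw'01 k (hikμ k)),
      lam_integral hν0 hw hw01 k, lam_integral hμ0 hw' hw'01 k]
    have e1 : ∫ z, w z.2 * z.1 ^ k ∂ν = (c ^ m)⁻¹ * ∫ z, z.1 ^ k * z.2 ^ m ∂ν := by
      rw [← integral_const_mul]
      exact integral_congr_ae (Filter.Eventually.of_forall fun z => hptw z k)
    have e2 : ∫ z, w z.2 * z.1 ^ k ∂μ = (c ^ m)⁻¹ * ∫ z, z.1 ^ k * z.2 ^ m ∂μ := by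
      rw [← integral_const_mul]
      exact integral_congr_ae (Filter.Eventually.of_forall fun z => hptw z k)
    have e3 : ∫ z, w' z.2 * z.1 ^ k ∂μ
        = ∫ z, z.1 ^ k ∂μ - ∫ z, w z.2 * z.1 ^ k ∂μ := by
      rw [← integral_sub (hikμ k)]
      · exact integral_congr_ae (Filter.Eventually.of_forall fun z => by
          simp [hw'def]; ring)
      · refine (Integrable.const_mul (hμmom k m) ((c ^ m)⁻¹)).congr
          (Filter.Eventually.of_forall fun z => (hptw z k).symm)
    rw [e1, e3, e2, heq k m, integral_map measurable_fst.aemeasurable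
      ((measurable_id'.pow_const k).aestronglyMeasurable)]
    show (c ^ m)⁻¹ * ∫ z, z.1 ^ k * z.2 ^ m ∂μ +
      ((∫ z, z.1 ^ k ∂μ) - (c ^ m)⁻¹ * ∫ z, z.1 ^ k * z.2 ^ m ∂μ) = ∫ z, z.1 ^ k ∂μ
    ring
  -- radial determinacy
  have hρeq : ρ = Measure.map Prod.fst μ := hrad ρ hρfin hρsupp hρint hρmom
  -- decomposition of the radial marginal of μ
  have hdec : Measure.map Prod.fst μ = lam μ w + lam μ w' := by
    rw [lam, lam, ← Measure.map_add _ _ measurable_fst]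
    congr 1
    have hd2 : Measurable fun z : ℝ × ℝ => ((w' z.2).toNNReal : ℝ≥0∞) := by
      exact ((hw'.comp measurable_snd).real_toNNReal).coe_nnreal_ennreal
    rw [← withDensity_add_right _ hd2,
      show ((fun z : ℝ × ℝ => ((w z.2).toNNReal : ℝ≥0∞)) + fun z => ((w' z.2).toNNReal : ℝ≥0∞))
        = fun z : ℝ × ℝ => ((w z.2).toNNReal : ℝ≥0∞) + ((w' z.2).toNNReal : ℝ≥0∞) from rfl]
    have hone : (fun z : ℝ × ℝ => ((w z.2).toNNReal : ℝ≥0∞) + ((w' z.2).toNNReal : ℝ≥0∞))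
        =ᵐ[μ] (1 : ℝ × ℝ → ℝ≥0∞) := by
      refine (ae_mem_rect hμ0).mono fun z hz => ?_
      have h1 := (hw01 _ hz.2).1
      have h2 := (hw'01 _ hz.2).1
      show ENNReal.ofReal (w z.2) + ENNReal.ofReal (w' z.2) = 1
      rw [← ENNReal.ofReal_add h1 h2]
      simp [hw'def]
    rw [withDensity_congr_ae hone, withDensity_one]
  have hlam : lam ν w = lam μ w := by
    refine cancel _ _ (lam μ w') ?_
    rw [← hρdef, hρeq, hdec]
  -- evaluate at B
  have hSB : MeasurableSet (Prod.fst ⁻¹' B : Set (ℝ × ℝ)) := measurable_fst hB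
  have h1 : ∫⁻ z in Prod.fst ⁻¹' B, ((w z.2).toNNReal : ℝ≥0∞) ∂ν
      = ∫⁻ z in Prod.fst ⁻¹' B, ((w z.2).toNNReal : ℝ≥0∞) ∂μ := by
    have h := congrArg (fun ρ : Measure ℝ => ρ B) hlam
    simpa [lam, Measure.map_apply measurable_fst hB, withDensity_apply _ hSB] using h
  -- convert to Bochner integrals
  have conv : ∀ (κ : Measure (ℝ × ℝ)), κ rectᶜ = 0 →
      ∫ z in Prod.fst ⁻¹' B, z.2 ^ m ∂κ
        = c ^ m * (∫⁻ z in Prod.fst ⁻¹' B, ((w z.2).toNNReal : ℝ≥0∞) ∂κ).toReal := by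
    intro κ h0
    have hae : ∀ᵐ z ∂(κ.restrict (Prod.fst ⁻¹' B)), z ∈ rect :=
      ae_restrict_of_ae (ae_mem_rect h0)
    have hnn : 0 ≤ᵐ[κ.restrict (Prod.fst ⁻¹' B)] fun z : ℝ × ℝ => w z.2 :=
      hae.mono fun z hz => (hw01 _ hz.2).1
    have h2 : ∫ z in Prod.fst ⁻¹' B, w z.2 ∂κ
        = (∫⁻ z in Prod.fst ⁻¹' B, ENNReal.ofReal (w z.2) ∂κ).toReal :=
      integral_eq_lintegral_of_nonneg_ae hnn
        ((hw.comp measurable_snd).aestronglyMeasurable)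
    have h3 : ∫ z in Prod.fst ⁻¹' B, z.2 ^ m ∂κ
        = c ^ m * ∫ z in Prod.fst ⁻¹' B, w z.2 ∂κ := by
      rw [← integral_const_mul]
      refine integral_congr_ae (Filter.Eventually.of_forall fun z => ?_)
      simp only [hwdef, div_pow]
      field_simp
    rw [h3, h2]
    rfl
  rw [conv ν hν0, conv μ hμ0, h1]

end PolarAux

/-- If a finite Borel measure `μ` on `[0,∞) × [0,2π]` (polar
form) with all moments finite has determinate radial marginal (on `[0,∞)`) and
determinate angular marginal (on the compact set `[0,2π]`), then `μ` is
determinate on `[0,∞) × [0,2π]`. -/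
theorem determinate_polar_of_marginals_determinate
    (μ : Measure (ℝ × ℝ)) [IsFiniteMeasure μ]
    (hsupp : μ (Set.Ici (0:ℝ) ×ˢ Set.Icc (0:ℝ) (2 * Real.pi))ᶜ = 0)
    (hmom : ∀ n' m' : ℕ, Integrable (fun z => z.1 ^ n' * z.2 ^ m') μ)
    (hrad : DeterminateOn (Set.Ici 0) (Measure.map Prod.fst μ))
    (hang : DeterminateOn (Set.Icc 0 (2 * Real.pi)) (Measure.map Prod.snd μ)) :
    ∀ ν : Measure (ℝ × ℝ), IsFiniteMeasure ν →
      ν (Set.Ici (0:ℝ) ×ˢ Set.Icc (0:ℝ) (2 * Real.pi))ᶜ = 0 →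
      (∀ n' m' : ℕ, Integrable (fun z => z.1 ^ n' * z.2 ^ m') ν) →
      (∀ n' m' : ℕ,
        ∫ z, z.1 ^ n' * z.2 ^ m' ∂ν = ∫ z, z.1 ^ n' * z.2 ^ m' ∂μ) →
      ν = μ := by
  intro ν hνfin hν0 hνmom hνeq
  haveI := hνfin
  have hμ0 : μ PolarAux.rectᶜ = 0 := hsupp
  have hν0' : ν PolarAux.rectᶜ = 0 := hν0
  have hintν : ∀ m : ℕ, Integrable (fun z : ℝ × ℝ => z.2 ^ m) ν := fun m => by
    simpa using hνmom 0 m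
  have hintμ : ∀ m : ℕ, Integrable (fun z : ℝ × ℝ => z.2 ^ m) μ := fun m => by
    simpa using hmom 0 m
  -- Step 2: equality of angular slices over each radial set B
  have step2 : ∀ {B : Set ℝ}, MeasurableSet B →
      (ν.restrict (Prod.fst ⁻¹' B)).map Prod.snd
        = (μ.restrict (Prod.fst ⁻¹' B)).map Prod.snd := by
    intro B hB
    set S : Set (ℝ × ℝ) := Prod.fst ⁻¹' B with hSdef
    have hS : MeasurableSet S := measurable_fst hB
    set τ : Measure ℝ := (ν.restrict S).map Prod.snd + (μ.restrict Sᶜ).map Prod.snd with hτdef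
    haveI hτfin : IsFiniteMeasure τ := by rw [hτdef]; infer_instance
    have hτsupp : τ (Set.Icc (0:ℝ) (2 * Real.pi))ᶜ = 0 := by
      have hsub : (Prod.snd ⁻¹' (Set.Icc (0:ℝ) (2 * Real.pi))ᶜ : Set (ℝ × ℝ))
          ⊆ PolarAux.rectᶜ := fun z hz hmem => hz hmem.2
      rw [hτdef, Measure.add_apply,
        Measure.map_apply measurable_snd measurableSet_Icc.compl,
        Measure.map_apply measurable_snd measurableSet_Icc.compl]
      have e1 : ν.restrict S (Prod.snd ⁻¹' (Set.Icc (0:ℝ) (2 * Real.pi))ᶜ) = 0 :=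
        le_antisymm (le_trans (Measure.restrict_le_self _)
          (le_of_eq (measure_mono_null hsub hν0'))) (zero_le)
      have e2 : μ.restrict Sᶜ (Prod.snd ⁻¹' (Set.Icc (0:ℝ) (2 * Real.pi))ᶜ) = 0 :=
        le_antisymm (le_trans (Measure.restrict_le_self _)
          (le_of_eq (measure_mono_null hsub hμ0))) (zero_le)
      rw [e1, e2, add_zero]
    have hmint : ∀ (κ : Measure (ℝ × ℝ)) (T : Set (ℝ × ℝ)), MeasurableSet T →
        (∀ m : ℕ, Integrable (fun z : ℝ × ℝ => z.2 ^ m) κ) →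
        ∀ k : ℕ, Integrable (fun t : ℝ => t ^ k) ((κ.restrict T).map Prod.snd) := by
      intro κ T hT hint k
      rw [integrable_map_measure ((measurable_id'.pow_const k).aestronglyMeasurable)
        measurable_snd.aemeasurable]
      exact ((hint k).restrict)
    have hτint : ∀ k : ℕ, Integrable (fun t : ℝ => t ^ k) τ := fun k => by
      rw [hτdef]
      exact (hmint ν S hS hintν k).add_measure (hmint μ Sᶜ hS.compl hintμ k)
    have hmapint : ∀ (κ : Measure (ℝ × ℝ)) (T : Set (ℝ × ℝ)), ∀ k : ℕ,
        ∫ t, t ^ k ∂((κ.restrict T).map Prod.snd) = ∫ z in T, z.2 ^ k ∂κ := by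
      intro κ T k
      rw [integral_map measurable_snd.aemeasurable
        ((measurable_id'.pow_const k).aestronglyMeasurable)]
    have hτmom : ∀ k : ℕ, ∫ t, t ^ k ∂τ = ∫ t, t ^ k ∂(Measure.map Prod.snd μ) := by
      intro k
      rw [hτdef, integral_add_measure (hmint ν S hS hintν k) (hmint μ Sᶜ hS.compl hintμ k),
        hmapint ν S k, hmapint μ Sᶜ k,
        PolarAux.step1 μ ν hμ0 hν0' hmom hνmom hrad hνeq k hB,
        integral_add_compl hS (hintμ k),
        integral_map measurable_snd.aemeasurable
          ((measurable_id'.pow_const k).aestronglyMeasurable)]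
    have hτeq : τ = Measure.map Prod.snd μ := hang τ hτfin hτsupp hτint hτmom
    have hdec : Measure.map Prod.snd μ
        = (μ.restrict S).map Prod.snd + (μ.restrict Sᶜ).map Prod.snd := by
      rw [← Measure.map_add _ _ measurable_snd, Measure.restrict_add_restrict_compl hS]
    refine PolarAux.cancel _ _ ((μ.restrict Sᶜ).map Prod.snd) ?_
    rw [← hτdef, hτeq, hdec]
  -- rectangles
  have hrect : ∀ {B A : Set ℝ}, MeasurableSet B → MeasurableSet A →
      ν (B ×ˢ A) = μ (B ×ˢ A) := by
    intro B A hB hA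
    have h := congrArg (fun ρ : Measure ℝ => ρ A) (step2 hB)
    simp only [Measure.map_apply measurable_snd hA,
      Measure.restrict_apply (measurable_snd hA)] at h
    rw [Set.prod_eq, Set.inter_comm]
    exact h
  -- conclude by the π-system uniqueness theorem
  refine MeasureTheory.ext_of_generate_finite
    (Set.image2 (· ×ˢ ·) { s : Set ℝ | MeasurableSet s } { t : Set ℝ | MeasurableSet t })
    generateFrom_prod.symm isPiSystem_prod ?_ ?_
  · rintro s ⟨B, hB, A, hA, rfl⟩
    exact hrect hB hA
  · rw [← Set.univ_prod_univ]
    exact hrect MeasurableSet.univ MeasurableSet.univ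
end
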